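/- Every weird number of the form 2^k·p·q (k ≥ 1, p < q odd primes) is primitive weird, i.e., none of its proper divisors is weird. -/
import Mathlib

/-- Sum of the positive divisors of `n`. -/
def sigma' (n : ℕ) : ℕ := ∑ d ∈ n.divisors, d

/-- `n` is abundant if `σ(n) > 2n`. -/
def Abundant (n : ℕ) : Prop := 2 * n < sigma' n

/-- `n` is pseudoperfect (in the weak sense) if some subset of its proper divisors sums to `n`. -/
def Pseudoperfect (n : ℕ) : Prop := ∃ s ⊆ n.properDivisors, ∑ d ∈ s, d = n

/-- `n` is weird if it is abundant and no subset of its proper divisors sums to `n`. -/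
def Weird (n : ℕ) : Prop := Abundant n ∧ ¬ Pseudoperfect n

lemma sum_two_pow (a : ℕ) : ∑ i ∈ Finset.range a, 2 ^ i = 2 ^ a - 1 := by
  induction a with
  | zero => simp
  | succ n ih =>
    rw [Finset.sum_range_succ, ih, pow_succ]
    have : 1 ≤ 2 ^ n := Nat.one_le_two_pow
    omega

lemma sigma'_two_pow (a : ℕ) : sigma' (2 ^ a) = 2 ^ (a + 1) - 1 := by
  rw [sigma', Nat.divisors_prime_pow Nat.prime_two, Finset.sum_map]
  simpa using sum_two_pow (a + 1)

lemma sigma'_prime {r : ℕ} (hr : r.Prime) : sigma' r = r + 1 := by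
  rw [sigma', hr.divisors]
  rw [Finset.sum_insert (by simpa using hr.one_lt.ne)]
  simp [Nat.add_comm]

lemma sigma'_mul {m n : ℕ} (h : m.Coprime n) : sigma' (m * n) = sigma' m * sigma' n :=
  h.sum_divisors_mul

lemma exists_binary (m : ℕ) : ∀ n < 2 ^ m, ∃ S ⊆ Finset.range m, ∑ i ∈ S, 2 ^ i = n := by
  induction m with
  | zero =>
    intro n hn
    interval_cases n
    exact ⟨∅, by simp, by simp⟩
  | succ m ih =>
    intro n hn
    by_cases h2 : n < 2 ^ m
    · obtain ⟨S, hS, hsum⟩ := ih n h2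
      exact ⟨S, hS.trans (Finset.range_subset_range.2 (Nat.le_succ m)), hsum⟩
    · have h3 : n - 2 ^ m < 2 ^ m := by rw [pow_succ] at hn; omega
      obtain ⟨S, hS, hsum⟩ := ih _ h3
      have hm : m ∉ S := fun hmem => by simpa using hS hmem
      refine ⟨insert m S, ?_, ?_⟩
      · exact Finset.insert_subset (by simp) (hS.trans (Finset.range_subset_range.2 (Nat.le_succ m)))
      · rw [Finset.sum_insert hm, hsum]; omega

lemma pseudo_gen {a r c : ℕ} (hrp : r.Prime) (hr2 : r ≠ 2) (hc : 0 < c)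
    (h : r < 2 ^ (a + 1)) :
    Pseudoperfect (2 ^ a * (r * c)) := by
  obtain ⟨S, hS, hsum⟩ := exists_binary (a + 1) r h
  have hr1 : 1 < r := hrp.one_lt
  have hclt : c < r * c := lt_mul_of_one_lt_left hc hr1
  have hinj1 : Function.Injective (fun i : ℕ => 2 ^ i * (r * c)) := by
    intro i j hij
    simp only at hij
    have : (2 : ℕ) ^ i = 2 ^ j :=
      Nat.eq_of_mul_eq_mul_right (by positivity) hij
    exact Nat.pow_right_injective (le_refl 2) this
  have hinj2 : Function.Injective (fun i : ℕ => 2 ^ i * c) := by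
    intro i j hij
    simp only at hij
    have : (2 : ℕ) ^ i = 2 ^ j := Nat.eq_of_mul_eq_mul_right hc hij
    exact Nat.pow_right_injective (le_refl 2) this
  set T1 := (Finset.range a).image (fun i => 2 ^ i * (r * c)) with hT1
  set T2 := S.image (fun i => 2 ^ i * c) with hT2
  have hdisj : Disjoint T1 T2 := by
    rw [Finset.disjoint_left]
    rintro x hx1 hx2
    simp only [hT1, hT2, Finset.mem_image] at hx1 hx2
    obtain ⟨i, _, hi⟩ := hx1
    obtain ⟨j, _, hj⟩ := hx2
    rw [← hj] at hi
    have heq : 2 ^ i * r * c = 2 ^ j * c := by rw [mul_assoc]; exact hi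
    have h2 : 2 ^ i * r = 2 ^ j := Nat.eq_of_mul_eq_mul_right hc heq
    have hdvd : r ∣ 2 ^ j := ⟨2 ^ i, by rw [← h2]; ring⟩
    exact hr2 ((Nat.prime_dvd_prime_iff_eq hrp Nat.prime_two).mp (hrp.dvd_of_dvd_pow hdvd))
  refine ⟨T1 ∪ T2, ?_, ?_⟩
  · apply Finset.union_subset
    · intro x hx
      simp only [hT1, Finset.mem_image, Finset.mem_range] at hx
      obtain ⟨i, hi, rfl⟩ := hx
      rw [Nat.mem_properDivisors]
      refine ⟨mul_dvd_mul_right (pow_dvd_pow 2 hi.le) _, ?_⟩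
      exact Nat.mul_lt_mul_of_lt_of_le (Nat.pow_lt_pow_right one_lt_two hi)
        (le_refl _) (by positivity)
    · intro x hx
      simp only [hT2, Finset.mem_image] at hx
      obtain ⟨i, hi, rfl⟩ := hx
      have hia : i ≤ a := by have := hS hi; simp only [Finset.mem_range] at this; omega
      rw [Nat.mem_properDivisors]
      refine ⟨mul_dvd_mul (pow_dvd_pow 2 hia) (dvd_mul_left c r), ?_⟩
      calc 2 ^ i * c ≤ 2 ^ a * c :=
            Nat.mul_le_mul_right c (Nat.pow_le_pow_right (by norm_num) hia)
        _ < 2 ^ a * (r * c) := Nat.mul_lt_mul_of_le_of_lt (le_refl _) hclt (by positivity)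
  · rw [Finset.sum_union hdisj, hT1, Finset.sum_image (fun i _ j _ h => hinj1 h), hT2,
      Finset.sum_image (fun i _ j _ h => hinj2 h), ← Finset.sum_mul, ← Finset.sum_mul,
      sum_two_pow, hsum, Nat.sub_one_mul]
    have h1 : r * c ≤ 2 ^ a * (r * c) := Nat.le_mul_of_pos_left _ (by positivity)
    omega

lemma dvd_pq {p q e : ℕ} (hp : p.Prime) (hq : q.Prime) (h : e ∣ p * q) :
    e = 1 ∨ e = p ∨ e = q ∨ e = p * q := by
  by_cases hpe : p ∣ e
  · obtain ⟨f, rfl⟩ := hpe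
    have hf : f ∣ q := (Nat.mul_dvd_mul_iff_left hp.pos).mp h
    rcases (Nat.Prime.eq_one_or_self_of_dvd hq f hf) with rfl | rfl
    · right; left; exact mul_one p
    · right; right; right; rfl
  · have hcop : e.Coprime p := ((Nat.Prime.coprime_iff_not_dvd hp).mpr hpe).symm
    have he : e ∣ q := hcop.dvd_of_dvd_mul_left h
    rcases (Nat.Prime.eq_one_or_self_of_dvd hq e he) with rfl | rfl
    · left; rfl
    · right; right; left; rfl

theorem weird_2kpq_primitive (k p q : ℕ) (hk : 1 ≤ k) (hp : p.Prime) (hq : q.Prime)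
    (hop : Odd p) (hoq : Odd q) (hpq : p < q) (hw : Weird (2 ^ k * p * q)) :
    ∀ d : ℕ, d ∣ 2 ^ k * p * q → d < 2 ^ k * p * q → ¬ Weird d := by
  intro d hdvd hlt hwd
  have hp2 : p ≠ 2 := by rintro rfl; exact (by norm_num : ¬ Odd 2) hop
  have hq2 : q ≠ 2 := by rintro rfl; exact (by norm_num : ¬ Odd 2) hoq
  have hp3 : 3 ≤ p := by have := hp.two_le; omega
  have hq3 : 3 ≤ q := by have := hq.two_le; omega
  have hcop2p : Nat.Coprime 2 p := (Nat.coprime_primes Nat.prime_two hp).mpr (Ne.symm hp2)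
  have hcop2q : Nat.Coprime 2 q := (Nat.coprime_primes Nat.prime_two hq).mpr (Ne.symm hq2)
  have hcop : Nat.Coprime (2 ^ k) (p * q) := ((hcop2p.mul_right hcop2q).pow_left k)
  have hdvd' : d ∣ 2 ^ k * (p * q) := by rwa [← mul_assoc]
  obtain ⟨d1, d2, hd1, hd2, rfl⟩ := exists_dvd_and_dvd_of_dvd_mul hdvd'
  obtain ⟨a, ha, rfl⟩ := (Nat.dvd_prime_pow Nat.prime_two).mp hd1
  obtain ⟨habd, hnps⟩ := hwd
  -- abundance in terms of x = 2 ^ (a + 1)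
  rcases dvd_pq hp hq hd2 with rfl | heq | heq | heq
  · -- d = 2 ^ a : deficient
    rw [Abundant, mul_one, sigma'_two_pow] at habd
    have : 2 * 2 ^ a = 2 ^ (a + 1) := by ring
    omega
  · -- d = 2 ^ a * p
    rw [heq] at habd hnps
    rw [Abundant, sigma'_mul (hcop2p.pow_left a), sigma'_two_pow, sigma'_prime hp] at habd
    obtain ⟨y, hy⟩ : ∃ y, 2 ^ (a + 1) = y + 1 := ⟨2 ^ (a + 1) - 1, by have : 1 ≤ 2^(a+1) := Nat.one_le_two_pow; omega⟩
    rw [hy] at habd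
    have h2 : 2 * (2 ^ a * p) = (y + 1) * p := by rw [← hy]; ring
    rw [h2, Nat.add_sub_cancel] at habd
    have hplt : p < 2 ^ (a + 1) := by nlinarith
    exact hnps (mul_one p ▸ pseudo_gen hp hp2 one_pos hplt)
  · -- d = 2 ^ a * q
    rw [heq] at habd hnps
    rw [Abundant, sigma'_mul (hcop2q.pow_left a), sigma'_two_pow, sigma'_prime hq] at habd
    obtain ⟨y, hy⟩ : ∃ y, 2 ^ (a + 1) = y + 1 := ⟨2 ^ (a + 1) - 1, by have : 1 ≤ 2^(a+1) := Nat.one_le_two_pow; omega⟩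
    rw [hy] at habd
    have h2 : 2 * (2 ^ a * q) = (y + 1) * q := by rw [← hy]; ring
    rw [h2, Nat.add_sub_cancel] at habd
    have hqlt : q < 2 ^ (a + 1) := by nlinarith
    exact hnps (mul_one q ▸ pseudo_gen hq hq2 one_pos hqlt)
  · -- d = 2 ^ a * (p * q) with a < k
    rw [heq] at habd hnps hlt
    have hak : a < k := by
      by_contra hc
      have : a = k := le_antisymm ha (not_lt.mp hc)
      subst this
      rw [← mul_assoc] at hlt
      exact lt_irrefl _ hlt
    have hppq : Nat.Coprime p q := (Nat.coprime_primes hp hq).mpr (by omega)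
    rw [Abundant, sigma'_mul ((hcop2p.mul_right hcop2q).pow_left a),
      sigma'_mul hppq, sigma'_two_pow, sigma'_prime hp, sigma'_prime hq] at habd
    obtain ⟨y, hy⟩ : ∃ y, 2 ^ (a + 1) = y + 1 := ⟨2 ^ (a + 1) - 1, by have : 1 ≤ 2^(a+1) := Nat.one_le_two_pow; omega⟩
    rw [hy] at habd
    have h2 : 2 * (2 ^ a * (p * q)) = (y + 1) * (p * q) := by rw [← hy]; ring
    rw [h2, Nat.add_sub_cancel] at habd
    -- habd : (y + 1) * (p * q) < y * ((p + 1) * (q + 1))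
    have key : (p + 1) * (q + 1) < 2 ^ (a + 1) * (p + q + 1) := by rw [hy]; nlinarith
    have key2 : (p + 1) * (q + 1) < 2 ^ k * (p + q + 1) :=
      lt_of_lt_of_le key (Nat.mul_le_mul_right _ (Nat.pow_le_pow_right (by norm_num) (by omega)))
    have hple : (p + 1) * q < 2 ^ (k + 1) * q := by
      calc (p + 1) * q < (p + 1) * (q + 1) := by nlinarith
        _ < 2 ^ k * (p + q + 1) := key2
        _ ≤ 2 ^ k * (2 * q) := Nat.mul_le_mul_left _ (by omega)
        _ = 2 ^ (k + 1) * q := by ring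
    have hplt : p + 1 < 2 ^ (k + 1) := Nat.lt_of_mul_lt_mul_right hple
    have hps : Pseudoperfect (2 ^ k * (p * q)) := pseudo_gen hp hp2 hq.pos (by omega)
    rw [← mul_assoc] at hps
    exact hw.2 hps
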